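/- Let p > 3 be a prime, and let m and v be positive integers with gcd(m, v) = 1 and m·v² ≤ 4·√p. Suppose s is an integer with s² ≡ 4p (mod v²). Then there exists an integer t with |t| ≤ 2·√p such that m divides p + 1 − t and v² divides t² − 4p. -/

import Mathlib

/-- Let `p > 3` be prime, and let `m`, `v` be positive integers with
`gcd(m, v) = 1` and `m·v² ≤ 4·√p`. If `s` is an integer with `s² ≡ 4p (mod v²)`, then there
is an integer `t` with `|t| ≤ 2·√p` such that `m ∣ p + 1 − t` and `v² ∣ t² − 4p`. -/
theorem exists_trace_with_congruences (p : ℕ) (hp : p.Prime) (hp3 : 3 < p)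
    (m v : ℕ) (hm : 0 < m) (hv : 0 < v) (hcop : Nat.gcd m v = 1)
    (hmv : ((m : ℝ) * (v : ℝ) ^ 2) ≤ 4 * Real.sqrt p)
    (s : ℤ) (hs : s ^ 2 ≡ 4 * (p : ℤ) [ZMOD ((v : ℤ) ^ 2)]) :
    ∃ t : ℤ, |(t : ℝ)| ≤ 2 * Real.sqrt p ∧
      (m : ℤ) ∣ ((p : ℤ) + 1 - t) ∧ ((v : ℤ) ^ 2) ∣ (t ^ 2 - 4 * (p : ℤ)) := by
  -- coprimality of m and v²
  have hcop' : IsCoprime (m : ℤ) ((v : ℤ) ^ 2) := by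
    have : Nat.Coprime m (v ^ 2) := (Nat.coprime_iff_gcd_eq_one.mpr hcop).pow_right 2
    exact_mod_cast Nat.isCoprime_iff_coprime.mpr this
  obtain ⟨a, b, hab⟩ := hcop'
  set t₀ : ℤ := ((p : ℤ) + 1) * (b * (v : ℤ) ^ 2) + s * (a * (m : ℤ)) with ht₀
  set n : ℤ := (m : ℤ) * (v : ℤ) ^ 2 with hn
  have hnpos : 0 < n := by positivity
  set c : ℤ := ⌈-(2 * Real.sqrt p)⌉ with hc
  set t : ℤ := c + (t₀ - c) % n with ht
  -- t ≡ t₀ mod n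
  have hdvd : n ∣ t - t₀ := by
    have := Int.emod_add_mul_ediv (t₀ - c) n
    refine ⟨-((t₀ - c) / n), ?_⟩
    have h2 : (t₀ - c) % n = (t₀ - c) - n * ((t₀ - c) / n) := by linarith
    rw [ht, h2]; ring
  have htm : (m : ℤ) ∣ t - t₀ := dvd_trans ⟨(v : ℤ) ^ 2, rfl⟩ hdvd
  have htv : ((v : ℤ) ^ 2) ∣ t - t₀ := dvd_trans ⟨(m : ℤ), mul_comm _ _⟩ hdvd
  refine ⟨t, ?_, ?_, ?_⟩
  · -- bounds
    have hnn : 0 ≤ (t₀ - c) % n := Int.emod_nonneg _ (ne_of_gt hnpos)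
    have hlt : (t₀ - c) % n < n := Int.emod_lt_of_pos _ hnpos
    have hcl : -(2 * Real.sqrt p) ≤ (c : ℝ) := Int.le_ceil _
    have hcu : (c : ℝ) < -(2 * Real.sqrt p) + 1 := Int.ceil_lt_add_one _
    have hlow : -(2 * Real.sqrt p) ≤ (t : ℝ) := by
      have : (c : ℝ) ≤ (t : ℝ) := by exact_mod_cast le_add_of_nonneg_right hnn
      linarith
    have hhigh : (t : ℝ) ≤ 2 * Real.sqrt p := by
      have h1 : (t : ℝ) ≤ (c : ℝ) + (n : ℝ) - 1 := by
        have : t ≤ c + n - 1 := by omega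
        exact_mod_cast this
      have h2 : (n : ℝ) = (m : ℝ) * (v : ℝ) ^ 2 := by push_cast [hn]; ring
      linarith [hmv]
    rw [abs_le]; exact ⟨hlow, hhigh⟩
  · -- m ∣ p + 1 - t
    have h1 : (m : ℤ) ∣ ((p : ℤ) + 1 - t₀) := by
      have : (p : ℤ) + 1 - t₀ = ((p : ℤ) + 1) * (a * (m : ℤ)) - s * (a * (m : ℤ)) := by
        have : b * (v : ℤ) ^ 2 = 1 - a * (m : ℤ) := by linarith [hab]
        rw [ht₀, this]; ring
      rw [this]
      exact dvd_sub ⟨((p : ℤ) + 1) * a, by ring⟩ ⟨s * a, by ring⟩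
    have heq : (p : ℤ) + 1 - t = ((p : ℤ) + 1 - t₀) - (t - t₀) := by ring
    rw [heq]
    exact dvd_sub h1 htm
  · -- v² ∣ t² - 4p
    have h1 : ((v : ℤ) ^ 2) ∣ (t₀ - s) := by
      have : t₀ - s = ((p : ℤ) + 1) * (b * (v : ℤ) ^ 2) - s * (b * (v : ℤ) ^ 2) := by
        have : a * (m : ℤ) = 1 - b * (v : ℤ) ^ 2 := by linarith [hab]
        rw [ht₀, this]; ring
      rw [this]
      exact dvd_sub ⟨((p : ℤ) + 1) * b, by ring⟩ ⟨s * b, by ring⟩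
    have h2 : ((v : ℤ) ^ 2) ∣ (t - s) := by
      have heq : t - s = (t - t₀) + (t₀ - s) := by ring
      rw [heq]; exact dvd_add htv h1
    have hts : t ≡ s [ZMOD ((v : ℤ) ^ 2)] := Int.ModEq.symm (Int.modEq_iff_dvd.mpr h2)
    have : t ^ 2 ≡ 4 * (p : ℤ) [ZMOD ((v : ℤ) ^ 2)] := (hts.pow 2).trans hs
    exact this.symm.dvd
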